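/- (Precise form of Theorem 3.) Let N ≥ 3, let A ∈ ℂ^{N×N} be Hermitian positive definite with eigenvalues λ_0 > λ_1 ≥ ⋯ ≥ λ_{N−1} > 0 (descending, with multiplicity), let u_0 and u_{N−1} be orthonormal eigenvectors of A for λ_0 and λ_{N−1} respectively, let α, β > 0 with α² + β² = 1, and set b = α u_0 + β u_{N−1} and ξ = λ_0. If β λ_0 + λ_{N−1} < λ_1 and β λ_0 − (3/2) λ_{N−1} > λ_{N−2}, then the condition number of Θ = A − ξ b bᴴ equals λ_1/λ_{N−2}. -/

import Mathlib

open Matrix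
open scoped ComplexOrder

set_option maxHeartbeats 1600000

noncomputable section

/-- `l` lists the eigenvalues of the Hermitian matrix `A` (with Hermitian proof `hA`)
in descending order with multiplicity. -/
def IsDescEigListing {N : ℕ} {A : Matrix (Fin N) (Fin N) ℂ}
    (hA : A.IsHermitian) (l : Fin N → ℝ) : Prop :=
  Antitone l ∧ ∃ e : Equiv.Perm (Fin N), ∀ i, l i = hA.eigenvalues (e i)

/-- The condition number of a Hermitian matrix: the ratio of its largest singular value
to its smallest singular value, the singular values being the absolute values of the
eigenvalues. -/
noncomputable def hermCond {N : ℕ} {M : Matrix (Fin N) (Fin N) ℂ}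
    (hM : M.IsHermitian) : ℝ :=
  (⨆ i, |hM.eigenvalues i|) / (⨅ i, |hM.eigenvalues i|)

section Helpers
variable {n : ℕ}

variable {n : ℕ}

lemma vecMul_of_eig {A : Matrix (Fin n) (Fin n) ℂ} (hA : A.IsHermitian)
    {x : Fin n → ℂ} {s : ℝ} (hx : A *ᵥ x = (s : ℂ) • x) :
    star x ᵥ* A = (s : ℂ) • star x := by
  rw [← hA.eq, ← star_mulVec, hx]
  simp [Complex.conj_ofReal]

lemma dot_mulVec_of_eig {A : Matrix (Fin n) (Fin n) ℂ} (hA : A.IsHermitian)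
    {x : Fin n → ℂ} {s : ℝ} (hx : A *ᵥ x = (s : ℂ) • x) (y : Fin n → ℂ) :
    star x ⬝ᵥ (A *ᵥ y) = (s : ℂ) * (star x ⬝ᵥ y) := by
  rw [dotProduct_mulVec, vecMul_of_eig hA hx, smul_dotProduct, smul_eq_mul]

lemma dot_eq_zero_of_eig_ne {A : Matrix (Fin n) (Fin n) ℂ} (hA : A.IsHermitian)
    {x y : Fin n → ℂ} {s t : ℝ} (hx : A *ᵥ x = (s : ℂ) • x) (hy : A *ᵥ y = (t : ℂ) • y)
    (hst : s ≠ t) : star x ⬝ᵥ y = 0 := by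
  have h1 : star x ⬝ᵥ (A *ᵥ y) = (s : ℂ) * (star x ⬝ᵥ y) := dot_mulVec_of_eig hA hx y
  rw [hy] at h1
  simp only [dotProduct_smul, smul_eq_mul] at h1
  have h2 : ((s : ℂ) - t) * (star x ⬝ᵥ y) = 0 := by linear_combination -h1
  rcases mul_eq_zero.mp h2 with h | h
  · exact absurd (Complex.ofReal_inj.mp (sub_eq_zero.mp h)) hst
  · exact h

lemma basis_expansion {A : Matrix (Fin n) (Fin n) ℂ} (hA : A.IsHermitian) (z : Fin n → ℂ) :
    ∑ i, (star ⇑(hA.eigenvectorBasis i) ⬝ᵥ z) • hA.eigenvectorBasis i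
      = (WithLp.equiv 2 (Fin n → ℂ)).symm z := by
  refine Eq.trans (Finset.sum_congr rfl fun i _ => ?_) ((hA.eigenvectorBasis).sum_repr' ((WithLp.equiv 2 (Fin n → ℂ)).symm z))
  congr 1
  exact dotProduct_comm _ _

lemma exists_coeff_ne_zero {A : Matrix (Fin n) (Fin n) ℂ} (hA : A.IsHermitian)
    {z : Fin n → ℂ} (hz : z ≠ 0) :
    ∃ i, star ⇑(hA.eigenvectorBasis i) ⬝ᵥ z ≠ 0 := by
  by_contra hc
  push_neg at hc
  apply hz
  have h := basis_expansion hA z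
  rw [Finset.sum_eq_zero (fun i _ => by rw [hc i, zero_smul])] at h
  have : (WithLp.equiv 2 (Fin n → ℂ)).symm z = 0 := h.symm
  simpa using congrArg (WithLp.equiv 2 (Fin n → ℂ)) this

lemma eigvec_cast {A : Matrix (Fin n) (Fin n) ℂ} (hA : A.IsHermitian) (i : Fin n) :
    A *ᵥ ⇑(hA.eigenvectorBasis i) = ((hA.eigenvalues i : ℂ)) • ⇑(hA.eigenvectorBasis i) := by
  rw [hA.mulVec_eigenvectorBasis i]
  exact RCLike.real_smul_eq_coe_smul (K := ℂ) _ _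

lemma exists_eig_eq {A : Matrix (Fin n) (Fin n) ℂ} (hA : A.IsHermitian)
    {t : ℝ} {v : Fin n → ℂ} (hv : v ≠ 0) (h : A *ᵥ v = (t : ℂ) • v) :
    ∃ i, hA.eigenvalues i = t := by
  obtain ⟨i, hi⟩ := exists_coeff_ne_zero hA hv
  refine ⟨i, ?_⟩
  by_contra hne
  exact hi (dot_eq_zero_of_eig_ne hA (eigvec_cast hA i) h hne)

lemma exists_two_eig {A : Matrix (Fin n) (Fin n) ℂ} (hA : A.IsHermitian) {t : ℝ}
    {x y : Fin n → ℂ} (hx0 : x ≠ 0) (hy0 : y ≠ 0)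
    (hx : A *ᵥ x = (t : ℂ) • x) (hy : A *ᵥ y = (t : ℂ) • y)
    (hxy : star x ⬝ᵥ y = 0) :
    ∃ i j, i ≠ j ∧ hA.eigenvalues i = t ∧ hA.eigenvalues j = t := by
  by_contra hc
  push_neg at hc
  obtain ⟨i, hi⟩ := exists_coeff_ne_zero hA hx0
  obtain ⟨j, hj⟩ := exists_coeff_ne_zero hA hy0
  have hti : hA.eigenvalues i = t := by
    by_contra hne; exact hi (dot_eq_zero_of_eig_ne hA (eigvec_cast hA i) hx hne)
  have htj : hA.eigenvalues j = t := by
    by_contra hne; exact hj (dot_eq_zero_of_eig_ne hA (eigvec_cast hA j) hy hne)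
  have hij : i = j := by
    by_contra hne; exact (hc i j hne hti) htj
  subst hij
  have hcoeff : ∀ z : Fin n → ℂ, A *ᵥ z = (t : ℂ) • z → ∀ k, k ≠ i →
      star ⇑(hA.eigenvectorBasis k) ⬝ᵥ z = 0 := by
    intro z hz k hk
    have hne : hA.eigenvalues k ≠ t := fun h => (hc k i hk h) hti
    exact dot_eq_zero_of_eig_ne hA (eigvec_cast hA k) hz hne
  have hxe : (WithLp.equiv 2 (Fin n → ℂ)).symm x
      = (star ⇑(hA.eigenvectorBasis i) ⬝ᵥ x) • hA.eigenvectorBasis i := by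
    rw [← basis_expansion hA x]
    exact Finset.sum_eq_single i (fun k _ hk => by rw [hcoeff x hx k hk, zero_smul]) (by simp)
  have hye : (WithLp.equiv 2 (Fin n → ℂ)).symm y
      = (star ⇑(hA.eigenvectorBasis i) ⬝ᵥ y) • hA.eigenvectorBasis i := by
    rw [← basis_expansion hA y]
    exact Finset.sum_eq_single i (fun k _ hk => by rw [hcoeff y hy k hk, zero_smul]) (by simp)
  have hbb : (inner ℂ (hA.eigenvectorBasis i) (hA.eigenvectorBasis i) : ℂ) = 1 := by
    simpa using orthonormal_iff_ite.mp hA.eigenvectorBasis.orthonormal i i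
  have hkey : star x ⬝ᵥ y
      = (starRingEnd ℂ) (star ⇑(hA.eigenvectorBasis i) ⬝ᵥ x)
        * (star ⇑(hA.eigenvectorBasis i) ⬝ᵥ y) := by
    have h1 : (inner ℂ ((WithLp.equiv 2 (Fin n → ℂ)).symm x) ((WithLp.equiv 2 (Fin n → ℂ)).symm y) : ℂ)
        = star x ⬝ᵥ y := dotProduct_comm _ _
    rw [← h1, hxe, hye, inner_smul_left, inner_smul_right, hbb, mul_one]
  rw [hxy] at hkey
  rcases mul_eq_zero.mp hkey.symm with h | h
  · exact hi (by simpa using h)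
  · exact hj h

lemma vecMulVec_mulVec' (x y v : Fin n → ℂ) : vecMulVec x y *ᵥ v = (y ⬝ᵥ v) • x := by
  ext i
  simp only [mulVec, vecMulVec_apply, dotProduct, Pi.smul_apply, smul_eq_mul, Finset.sum_mul]
  exact Finset.sum_congr rfl fun j _ => by ring

lemma basis_dot {A : Matrix (Fin n) (Fin n) ℂ} (hA : A.IsHermitian) (i j : Fin n) :
    star ⇑(hA.eigenvectorBasis i) ⬝ᵥ ⇑(hA.eigenvectorBasis j) = if i = j then 1 else 0 := by
  have := orthonormal_iff_ite.mp hA.eigenvectorBasis.orthonormal i j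
  rw [EuclideanSpace.inner_eq_star_dotProduct, dotProduct_comm] at this
  simpa using this

lemma basis_ne_zero {A : Matrix (Fin n) (Fin n) ℂ} (hA : A.IsHermitian) (i : Fin n) :
    (⇑(hA.eigenvectorBasis i) : Fin n → ℂ) ≠ 0 := by
  intro h
  have h2 := basis_dot hA i i
  rw [h] at h2
  simp at h2

end Helpers


theorem aux_spectral {N : ℕ} (hN : 3 ≤ N)
    (A : Matrix (Fin N) (Fin N) ℂ) (hAh : A.IsHermitian)
    (lam : Fin N → ℝ) (hmono : Antitone lam) (e : Equiv.Perm (Fin N))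
    (he : ∀ i, lam i = hAh.eigenvalues (e i)) (hlampos : ∀ i, 0 < lam i)
    (i0 i1 iN2 iN1 : Fin N)
    (hv0 : (i0 : ℕ) = 0) (hv1 : (i1 : ℕ) = 1) (hv2 : (iN2 : ℕ) = N - 2)
    (hv3 : (iN1 : ℕ) = N - 1)
    (h01 : lam i0 > lam i1)
    (u0 uN : Fin N → ℂ)
    (hu0 : A *ᵥ u0 = (lam i0 : ℂ) • u0)
    (huN : A *ᵥ uN = (lam iN1 : ℂ) • uN)
    (hu0norm : star u0 ⬝ᵥ u0 = 1) (huNnorm : star uN ⬝ᵥ uN = 1)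
    (horth : star u0 ⬝ᵥ uN = 0)
    (α β : ℝ) (hα : 0 < α) (hβ : 0 < β) (hαβ : α ^ 2 + β ^ 2 = 1)
    (b : Fin N → ℂ) (hb : b = (α : ℂ) • u0 + (β : ℂ) • uN)
    (hcond1 : β * lam i0 + lam iN1 < lam i1)
    (hcond2 : β * lam i0 - (3 / 2) * lam iN1 > lam iN2)
    (hΘ : (A - ((lam i0 : ℝ) : ℂ) • vecMulVec b (star b)).IsHermitian) :
    (⨆ i, |hΘ.eigenvalues i|) = lam i1 ∧ (⨅ i, |hΘ.eigenvalues i|) = lam iN2 := by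
  -- basic order facts
  have h1leN2 : lam iN2 ≤ lam i1 := hmono (by rw [Fin.le_def]; omega)
  have hN1leN2 : lam iN1 ≤ lam iN2 := hmono (by rw [Fin.le_def]; omega)
  have hN1le1 : lam iN1 ≤ lam i1 := le_trans hN1leN2 h1leN2
  have hL0pos := hlampos i0
  have hL1pos := hlampos i1
  have hN2pos := hlampos iN2
  have hN1pos := hlampos iN1
  have hβ1 : β < 1 := by nlinarith
  have hN1lt1 : lam iN1 < lam i1 := by nlinarith
  have hN1lt0 : lam iN1 < lam i0 := lt_of_le_of_lt hN1le1 h01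
  have hN2lt0 : lam iN2 < lam i0 := by nlinarith
  have hu0nz : u0 ≠ 0 := by
    intro h; rw [h] at hu0norm; simp at hu0norm
  have huNnz : uN ≠ 0 := by
    intro h; rw [h] at huNnorm; simp at huNnorm
  have hNorth : star uN ⬝ᵥ u0 = 0 :=
    dot_eq_zero_of_eig_ne hAh huN hu0 (ne_of_lt hN1lt0)
  have hu0b : star u0 ⬝ᵥ b = (α : ℂ) := by
    rw [hb]; simp [dotProduct_add, dotProduct_smul, hu0norm, horth]
  have huNb : star uN ⬝ᵥ b = (β : ℂ) := by
    rw [hb]; simp [dotProduct_add, dotProduct_smul, huNnorm, hNorth]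
  have hbdot : ∀ w : Fin N → ℂ, star b ⬝ᵥ w
      = (α : ℂ) * (star u0 ⬝ᵥ w) + (β : ℂ) * (star uN ⬝ᵥ w) := by
    intro w
    rw [hb]
    simp [star_add, star_smul, add_dotProduct, smul_dotProduct, Complex.conj_ofReal]
  -- uniqueness of extreme eigenvalue indices
  have uniq0 : ∀ r : Fin N, lam r = lam i0 → r = i0 := by
    intro r hr
    by_contra hne
    have : (1 : ℕ) ≤ (r : ℕ) := by
      rcases Nat.eq_zero_or_pos (r : ℕ) with h | h
      · exact absurd (Fin.ext (by omega)) hne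
      · omega
    have : lam r ≤ lam i1 := hmono (by rw [Fin.le_def]; omega)
    linarith
  -- the key bound for any eigenvalue of Θ
  have key : ∀ (t : ℝ) (v : Fin N → ℂ), v ≠ 0 →
      (A - ((lam i0 : ℝ) : ℂ) • vecMulVec b (star b)) *ᵥ v = (t : ℂ) • v →
      lam iN2 ≤ |t| ∧ |t| ≤ lam i1 := by
    intro t v hvne hveq
    rw [sub_mulVec, smul_mulVec, vecMulVec_mulVec'] at hveq
    have hAv : A *ᵥ v = (t : ℂ) • v + ((lam i0 : ℝ) : ℂ) • ((star b ⬝ᵥ v) • b) :=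
      eq_add_of_sub_eq hveq
    set c0 : ℂ := star u0 ⬝ᵥ v with hc0
    set cN : ℂ := star uN ⬝ᵥ v with hcN
    have hγ : star b ⬝ᵥ v = (α : ℂ) * c0 + (β : ℂ) * cN := hbdot v
    have E1 : (lam i0 : ℂ) * c0
        = (t : ℂ) * c0 + (lam i0 : ℂ) * ((((α : ℂ) * c0 + (β : ℂ) * cN)) * (α : ℂ)) := by
      have h := congrArg (fun w => star u0 ⬝ᵥ w) hAv
      simp only [dotProduct_add, dotProduct_smul, smul_eq_mul,
        dot_mulVec_of_eig hAh hu0 v, hγ, hu0b] at h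
      linear_combination h
    have E2 : (lam iN1 : ℂ) * cN
        = (t : ℂ) * cN + (lam i0 : ℂ) * ((((α : ℂ) * c0 + (β : ℂ) * cN)) * (β : ℂ)) := by
      have h := congrArg (fun w => star uN ⬝ᵥ w) hAv
      simp only [dotProduct_add, dotProduct_smul, smul_eq_mul,
        dot_mulVec_of_eig hAh huN v, hγ, huNb] at h
      linear_combination h
    have E3 : A *ᵥ (v - c0 • u0 - cN • uN) = (t : ℂ) • (v - c0 • u0 - cN • uN) := by
      rw [mulVec_sub, mulVec_sub, mulVec_smul, mulVec_smul, hu0, huN, hAv, hγ, hb]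
      match_scalars
      · ring
      · linear_combination -E1
      · linear_combination -E2
    by_cases hvz : v - c0 • u0 - cN • uN = 0
    · -- v lies in the 2-dimensional space spanned by u0 and uN
      have hvc : v = c0 • u0 + cN • uN := by
        have h := hvz
        rw [sub_sub, sub_eq_zero] at h
        exact h
      have hcne : ¬(c0 = 0 ∧ cN = 0) := by
        rintro ⟨h1, h2⟩
        apply hvne
        rw [hvc, h1, h2, zero_smul, zero_smul, add_zero]
      have hC : (α : ℂ) ^ 2 + (β : ℂ) ^ 2 = 1 := by exact_mod_cast hαβ
      have E1' : ((lam i0 : ℂ) * (β : ℂ) ^ 2 - t) * c0 - (lam i0 : ℂ) * α * β * cN = 0 := by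
        linear_combination E1 + ((lam i0 : ℂ) * c0) * hC
      have E2' : ((lam iN1 : ℂ) - (lam i0 : ℂ) * (β : ℂ) ^ 2 - t) * cN
          - (lam i0 : ℂ) * α * β * c0 = 0 := by
        linear_combination E2
      have hD0 : ((t : ℂ) ^ 2 - (lam iN1 : ℂ) * t
          - (lam i0 : ℂ) * (β : ℂ) ^ 2 * ((lam i0 : ℂ) - (lam iN1 : ℂ))) * c0 = 0 := by
        linear_combination ((lam iN1 : ℂ) - (lam i0 : ℂ) * β ^ 2 - t) * E1'
          + ((lam i0 : ℂ) * α * β) * E2' + ((lam i0 : ℂ) ^ 2 * β ^ 2 * c0) * hC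
      have hDN : ((t : ℂ) ^ 2 - (lam iN1 : ℂ) * t
          - (lam i0 : ℂ) * (β : ℂ) ^ 2 * ((lam i0 : ℂ) - (lam iN1 : ℂ))) * cN = 0 := by
        linear_combination ((lam i0 : ℂ) * α * β) * E1'
          + ((lam i0 : ℂ) * β ^ 2 - t) * E2' + ((lam i0 : ℂ) ^ 2 * β ^ 2 * cN) * hC
      have hDC : ((t : ℂ) ^ 2 - (lam iN1 : ℂ) * t
          - (lam i0 : ℂ) * (β : ℂ) ^ 2 * ((lam i0 : ℂ) - (lam iN1 : ℂ))) = 0 := by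
        by_cases h0 : c0 = 0
        · exact (mul_eq_zero.mp hDN).resolve_right fun h => hcne ⟨h0, h⟩
        · exact (mul_eq_zero.mp hD0).resolve_right h0
      have hq : t ^ 2 - lam iN1 * t - lam i0 * β ^ 2 * (lam i0 - lam iN1) = 0 := by
        exact_mod_cast hDC
      constructor
      · by_contra hlt
        push_neg at hlt
        obtain ⟨ht1, ht2⟩ := abs_lt.mp hlt
        nlinarith [hq, mul_pos (sub_pos.mpr ht2) (by linarith : (0:ℝ) < lam iN2 + t),
          mul_pos hN1pos (by linarith : (0:ℝ) < lam iN2 + t),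
          mul_pos (by linarith : (0:ℝ) < β * lam i0 - (lam iN2 + 3 / 2 * lam iN1))
            (by nlinarith : (0:ℝ) < β * lam i0 + (lam iN2 + 3 / 2 * lam iN1) - lam iN1),
          mul_nonneg (mul_nonneg (by linarith : (0:ℝ) ≤ 1 - β)
            (mul_pos hβ hL0pos).le) hN1pos.le]
      · by_contra hgt
        push_neg at hgt
        rcases lt_abs.mp hgt with h | h
        · nlinarith [hq,
            mul_pos (by linarith : (0:ℝ) < lam i1 - lam iN1 - β * lam i0)
              (by nlinarith : (0:ℝ) < lam i1 - lam iN1 + β * lam i0),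
            mul_pos (by linarith : (0:ℝ) < t - lam i1)
              (by linarith : (0:ℝ) < t + lam i1 - lam iN1),
            mul_nonneg hN1pos.le (by linarith : (0:ℝ) ≤ lam i1 - lam iN1),
            mul_nonneg (mul_nonneg hβ.le hβ.le) (mul_nonneg hL0pos.le hN1pos.le)]
        · nlinarith [hq,
            mul_pos (by linarith : (0:ℝ) < lam i1 - lam iN1 - β * lam i0)
              (by nlinarith : (0:ℝ) < lam i1 - lam iN1 + β * lam i0),
            mul_pos (by linarith : (0:ℝ) < -t - lam i1)
              (by linarith : (0:ℝ) < -t + lam i1),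
            mul_pos hN1pos (by linarith : (0:ℝ) < -t),
            mul_nonneg hN1pos.le (by linarith : (0:ℝ) ≤ lam i1 - lam iN1),
            mul_nonneg (mul_nonneg hβ.le hβ.le) (mul_nonneg hL0pos.le hN1pos.le)]
    · -- v has a component orthogonal to u0 and uN
      obtain ⟨j, hj⟩ := exists_eig_eq hAh hvz E3
      have hlamj : lam (e.symm j) = t := by
        rw [he (e.symm j), Equiv.apply_symm_apply, hj]
      have htpos : 0 < t := hlamj ▸ hlampos (e.symm j)
      have horth0 : star u0 ⬝ᵥ (v - c0 • u0 - cN • uN) = 0 := by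
        simp only [dotProduct_sub, dotProduct_smul, smul_eq_mul, hu0norm, horth]
        rw [← hc0]
        ring
      have horthN : star uN ⬝ᵥ (v - c0 • u0 - cN • uN) = 0 := by
        simp only [dotProduct_sub, dotProduct_smul, smul_eq_mul, huNnorm, hNorth]
        rw [← hcN]
        ring
      have hup : t ≤ lam i1 := by
        by_cases hj0 : e.symm j = i0
        · exfalso
          have ht0 : t = lam i0 := by rw [← hlamj, hj0]
          obtain ⟨p, q, hpq, hp, hq⟩ :=
            exists_two_eig hAh hu0nz hvz hu0 (ht0 ▸ E3) horth0
          have hp' : lam (e.symm p) = lam i0 := by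
            rw [he (e.symm p), Equiv.apply_symm_apply, hp]
          have hq' : lam (e.symm q) = lam i0 := by
            rw [he (e.symm q), Equiv.apply_symm_apply, hq]
          have hne : e.symm p ≠ e.symm q := fun h => hpq (e.symm.injective h)
          rcases eq_or_ne (e.symm p) i0 with h | h
          · exact hne (h.trans (uniq0 _ hq').symm)
          · exact h (uniq0 _ hp')
        · have hjv : (1 : ℕ) ≤ ((e.symm j : Fin N) : ℕ) := by
            rcases Nat.eq_zero_or_pos ((e.symm j : Fin N) : ℕ) with h | h
            · exact absurd (Fin.ext (by omega)) hj0
            · omega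
          calc t = lam (e.symm j) := hlamj.symm
            _ ≤ lam i1 := hmono (by rw [Fin.le_def]; omega)
      have hlo : lam iN2 ≤ t := by
        by_cases hjN : ((e.symm j : Fin N) : ℕ) ≤ N - 2
        · calc lam iN2 ≤ lam (e.symm j) := hmono (by rw [Fin.le_def]; omega)
            _ = t := hlamj
        · have hjlt : ((e.symm j : Fin N) : ℕ) < N := (e.symm j).isLt
          have hjv : e.symm j = iN1 := Fin.ext (by omega)
          have htN : t = lam iN1 := by rw [← hlamj, hjv]
          rcases eq_or_lt_of_le hN1leN2 with hEq | hlt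
          · rw [htN, ← hEq]
          · exfalso
            obtain ⟨p, q, hpq, hp, hq⟩ :=
              exists_two_eig hAh huNnz hvz huN (htN ▸ E3) horthN
            have hp' : lam (e.symm p) = lam iN1 := by
              rw [he (e.symm p), Equiv.apply_symm_apply, hp]
            have hq' : lam (e.symm q) = lam iN1 := by
              rw [he (e.symm q), Equiv.apply_symm_apply, hq]
            have hne : e.symm p ≠ e.symm q := fun h => hpq (e.symm.injective h)
            have uniqN1 : ∀ r : Fin N, lam r = lam iN1 → r = iN1 := by
              intro r hr
              by_contra hrne
              have hrlt : (r : ℕ) < N := r.isLt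
              have hrv : (r : ℕ) ≤ N - 2 := by
                rcases Nat.lt_or_ge (r : ℕ) (N - 1) with h | h
                · omega
                · exact absurd (Fin.ext (by omega)) hrne
              have : lam iN2 ≤ lam r := hmono (by rw [Fin.le_def]; omega)
              linarith
            rcases eq_or_ne (e.symm p) iN1 with h | h
            · exact hne (h.trans (uniqN1 _ hq').symm)
            · exact h (uniqN1 _ hp')
      rw [abs_of_pos htpos]
      exact ⟨hlo, hup⟩

  -- λ₁ is attained
  have attain1 : ∃ i, hΘ.eigenvalues i = lam i1 := by
    have hwe : A *ᵥ ⇑(hAh.eigenvectorBasis (e i1))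
        = ((lam i1 : ℝ) : ℂ) • ⇑(hAh.eigenvectorBasis (e i1)) := by
      have h := eigvec_cast hAh (e i1)
      rwa [← he i1] at h
    have hwnz := basis_ne_zero hAh (e i1)
    have h1 : star u0 ⬝ᵥ ⇑(hAh.eigenvectorBasis (e i1)) = 0 :=
      dot_eq_zero_of_eig_ne hAh hu0 hwe (ne_of_gt h01)
    have h2 : star uN ⬝ᵥ ⇑(hAh.eigenvectorBasis (e i1)) = 0 :=
      dot_eq_zero_of_eig_ne hAh huN hwe (ne_of_lt hN1lt1)
    have hbw : star b ⬝ᵥ ⇑(hAh.eigenvectorBasis (e i1)) = 0 := by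
      rw [hbdot _, h1, h2]; ring
    have hΘw : (A - ((lam i0 : ℝ) : ℂ) • vecMulVec b (star b)) *ᵥ ⇑(hAh.eigenvectorBasis (e i1))
        = ((lam i1 : ℝ) : ℂ) • ⇑(hAh.eigenvectorBasis (e i1)) := by
      rw [sub_mulVec, smul_mulVec, vecMulVec_mulVec', hbw, zero_smul, smul_zero, sub_zero,
        hwe]
    exact exists_eig_eq hΘ hwnz hΘw
  -- λ_{N-2} is attained
  have attain2 : ∃ i, hΘ.eigenvalues i = lam iN2 := by
    have hw2e : A *ᵥ ⇑(hAh.eigenvectorBasis (e iN2))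
        = ((lam iN2 : ℝ) : ℂ) • ⇑(hAh.eigenvectorBasis (e iN2)) := by
      have h := eigvec_cast hAh (e iN2)
      rwa [← he iN2] at h
    obtain ⟨v, hvnz, hve, hvN⟩ : ∃ v : Fin N → ℂ, v ≠ 0 ∧
        A *ᵥ v = ((lam iN2 : ℝ) : ℂ) • v ∧ star uN ⬝ᵥ v = 0 := by
      by_cases hcase : lam iN2 = lam iN1
      · have hne23 : e iN2 ≠ e iN1 := by
          intro h
          have h2 := e.injective h
          rw [Fin.ext_iff, hv2, hv3] at h2
          omega
        have hw3e : A *ᵥ ⇑(hAh.eigenvectorBasis (e iN1))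
            = ((lam iN2 : ℝ) : ℂ) • ⇑(hAh.eigenvectorBasis (e iN1)) := by
          have h := eigvec_cast hAh (e iN1)
          rw [← he iN1] at h
          rwa [hcase]
        by_cases ha : star uN ⬝ᵥ ⇑(hAh.eigenvectorBasis (e iN2)) = 0
        · exact ⟨_, basis_ne_zero hAh (e iN2), hw2e, ha⟩
        · have d33 : star ⇑(hAh.eigenvectorBasis (e iN1)) ⬝ᵥ ⇑(hAh.eigenvectorBasis (e iN1))
              = 1 := by simpa using basis_dot hAh (e iN1) (e iN1)
          have d32 : star ⇑(hAh.eigenvectorBasis (e iN1)) ⬝ᵥ ⇑(hAh.eigenvectorBasis (e iN2))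
              = 0 := by
            have h := basis_dot hAh (e iN1) (e iN2)
            rwa [if_neg (Ne.symm hne23)] at h
          refine ⟨(star uN ⬝ᵥ ⇑(hAh.eigenvectorBasis (e iN2))) • ⇑(hAh.eigenvectorBasis (e iN1))
              - (star uN ⬝ᵥ ⇑(hAh.eigenvectorBasis (e iN1))) • ⇑(hAh.eigenvectorBasis (e iN2)),
              ?_, ?_, ?_⟩
          · intro h
            have h3 := congrArg (fun z => star ⇑(hAh.eigenvectorBasis (e iN1)) ⬝ᵥ z) h
            simp only [dotProduct_sub, dotProduct_smul, d33, d32, smul_eq_mul, mul_one, mul_zero,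
              sub_zero, dotProduct_zero] at h3
            exact ha h3
          · rw [mulVec_sub, mulVec_smul, mulVec_smul, hw2e, hw3e]
            module
          · simp only [dotProduct_sub, dotProduct_smul, smul_eq_mul]
            ring
      · exact ⟨_, basis_ne_zero hAh (e iN2), hw2e,
          dot_eq_zero_of_eig_ne hAh huN hw2e fun h => hcase h.symm⟩
    have h1 : star u0 ⬝ᵥ v = 0 := dot_eq_zero_of_eig_ne hAh hu0 hve (ne_of_gt hN2lt0)
    have hbw : star b ⬝ᵥ v = 0 := by rw [hbdot _, h1, hvN]; ring
    have hΘw : (A - ((lam i0 : ℝ) : ℂ) • vecMulVec b (star b)) *ᵥ v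
        = ((lam iN2 : ℝ) : ℂ) • v := by
      rw [sub_mulVec, smul_mulVec, vecMulVec_mulVec', hbw, zero_smul, smul_zero, sub_zero,
        hve]
    exact exists_eig_eq hΘ hvnz hΘw
  have bound : ∀ i, lam iN2 ≤ |hΘ.eigenvalues i| ∧ |hΘ.eigenvalues i| ≤ lam i1 := by
    intro i
    exact key _ _ (basis_ne_zero hΘ i) (eigvec_cast hΘ i)
  haveI : Nonempty (Fin N) := ⟨i0⟩
  constructor
  · apply le_antisymm
    · exact ciSup_le fun i => (bound i).2
    · obtain ⟨i, hi⟩ := attain1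
      have habs : |hΘ.eigenvalues i| = lam i1 := by rw [hi, abs_of_pos hL1pos]
      exact habs ▸ le_ciSup (f := fun i => |hΘ.eigenvalues i|) (Set.Finite.bddAbove (Set.finite_range _)) i
  · apply le_antisymm
    · obtain ⟨i, hi⟩ := attain2
      have habs : |hΘ.eigenvalues i| = lam iN2 := by rw [hi, abs_of_pos hN2pos]
      exact habs ▸ ciInf_le (f := fun i => |hΘ.eigenvalues i|) (Set.Finite.bddBelow (Set.finite_range _)) i
    · exact le_ciInf fun i => (bound i).1
/-- Theorem 3 (precise form): with `b = α u₀ + β u_{N-1}` and `ξ = λ₀`, if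
`β λ₀ + λ_{N-1} < λ₁` and `β λ₀ - (3/2) λ_{N-1} > λ_{N-2}`, then the condition number of
`Θ = A - ξ b bᴴ` equals `λ₁/λ_{N-2}`. -/
theorem sr1r_pia_condition {N : ℕ} (hN : 3 ≤ N)
    (A : Matrix (Fin N) (Fin N) ℂ) (hA : A.PosDef)
    (lam : Fin N → ℝ) (hlam : IsDescEigListing hA.isHermitian lam)
    (hlampos : ∀ i, 0 < lam i)
    (h01 : lam ⟨0, by omega⟩ > lam ⟨1, by omega⟩)
    (u0 uN : Fin N → ℂ)
    (hu0 : A *ᵥ u0 = (lam ⟨0, by omega⟩ : ℂ) • u0)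
    (huN : A *ᵥ uN = (lam ⟨N - 1, by omega⟩ : ℂ) • uN)
    (hu0norm : star u0 ⬝ᵥ u0 = 1) (huNnorm : star uN ⬝ᵥ uN = 1)
    (horth : star u0 ⬝ᵥ uN = 0)
    (α β : ℝ) (hα : 0 < α) (hβ : 0 < β) (hαβ : α ^ 2 + β ^ 2 = 1)
    (b : Fin N → ℂ) (hb : b = (α : ℂ) • u0 + (β : ℂ) • uN)
    (ξ : ℝ) (hξ : ξ = lam ⟨0, by omega⟩)
    (hcond1 : β * lam ⟨0, by omega⟩ + lam ⟨N - 1, by omega⟩ < lam ⟨1, by omega⟩)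
    (hcond2 : β * lam ⟨0, by omega⟩ - (3 / 2) * lam ⟨N - 1, by omega⟩ > lam ⟨N - 2, by omega⟩)
    (hΘ : (A - (ξ : ℂ) • vecMulVec b (star b)).IsHermitian) :
    hermCond hΘ = lam ⟨1, by omega⟩ / lam ⟨N - 2, by omega⟩ := by
  obtain ⟨hmono, e, he⟩ := hlam
  subst hξ
  obtain ⟨hs, hi⟩ := aux_spectral hN A hA.isHermitian lam hmono e he hlampos
    ⟨0, by omega⟩ ⟨1, by omega⟩ ⟨N - 2, by omega⟩ ⟨N - 1, by omega⟩ rfl rfl rfl rfl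
    h01 u0 uN hu0 huN hu0norm huNnorm horth α β hα hβ hαβ b hb hcond1 hcond2 hΘ
  unfold hermCond
  rw [hs, hi]
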